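/- Let p ∈ [1,2] and let α ≥ 2 be an integer. For each positive integer k set j_k = α^{k(k-1)}, and define the sequence (x^{(j)})_{j≥1} in ℓ_p(ℂ) by: if j_k ≤ j ≤ 2j_k − 1 for some (necessarily unique) positive integer k, then x^{(j)} = j_k^{−(1/2 + 1/p + 1/k)} · ∑_{s=1}^{j_k} exp(2πi·rs/j_k) · e_{j_k + s − 1}, where r = j − j_k + 1; otherwise x^{(j)} = 0. Then the series ∑_j x^{(j)} is unconditionally summable in ℓ_p(ℂ) (i.e., the family (x^{(j)})_j is summable), and for every ε > 0 one has ∑_{j=1}^∞ ‖x^{(j)}‖_p^{2−ε} = ∞. -/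

import Mathlib

open scoped ENNReal Real
open Complex Finset

lemma orth_aux (J : ℕ) (hJ : 0 < J) (m : ℤ) (hm : m ≠ 0) (hmJ : |m| < J) :
    ∑ s ∈ Finset.Icc 1 J, Complex.exp (2 * π * Complex.I * m * s / J) = 0 := by
  have hJc : (J : ℂ) ≠ 0 := Nat.cast_ne_zero.2 hJ.ne'
  set ζ : ℂ := Complex.exp (2 * π * Complex.I * m / J) with hζ
  have hpow : ∀ s : ℕ, Complex.exp (2 * π * Complex.I * m * s / J) = ζ ^ s := by
    intro s
    rw [hζ, ← Complex.exp_nat_mul]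
    congr 1
    ring
  have hζJ : ζ ^ J = 1 := by
    rw [hζ, ← Complex.exp_nat_mul]
    have : (J : ℂ) * (2 * π * Complex.I * m / J) = m * (2 * π * Complex.I) := by
      field_simp
    rw [this, Complex.exp_int_mul_two_pi_mul_I]
  have hζ1 : ζ ≠ 1 := by
    intro h
    rw [hζ, Complex.exp_eq_one_iff] at h
    obtain ⟨n, hn⟩ := h
    have hπ : (π : ℂ) ≠ 0 := Complex.ofReal_ne_zero.2 Real.pi_ne_zero
    have h2 : (2 * (π:ℂ) * Complex.I) ≠ 0 := by
      simp [Real.pi_ne_zero, Complex.I_ne_zero, Complex.ofReal_ne_zero]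
    have h3 := (div_eq_iff hJc).1 hn
    have : (m : ℂ) = n * J := by
      apply mul_left_cancel₀ h2
      linear_combination h3
    have hm' : m = n * J := by exact_mod_cast this
    rcases eq_or_ne n 0 with rfl | hn0
    · simp at hm'; exact hm hm'
    · have : (J : ℤ) ≤ |m| := by
        rw [hm', abs_mul, abs_of_nonneg (by positivity : (0:ℤ) ≤ (J:ℤ))]
        nlinarith [Int.one_le_abs hn0, (Nat.cast_pos (α := ℤ)).2 hJ]
      omega
  calc ∑ s ∈ Finset.Icc 1 J, Complex.exp (2 * π * Complex.I * m * s / J)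
      = ∑ s ∈ Finset.range J, ζ ^ (1 + s) := by
        rw [← Finset.Ico_add_one_right_eq_Icc, Finset.sum_Ico_eq_sum_range]
        simp only [hpow, Nat.succ_sub_one, Nat.add_sub_cancel]
    _ = ζ * ∑ s ∈ Finset.range J, ζ ^ s := by
        rw [Finset.mul_sum]; congr 1; ext s; rw [pow_add, pow_one]
    _ = 0 := by
        rw [geom_sum_eq hζ1, hζJ]
        simp

lemma holder_aux (F : Finset ℕ) (a : ℕ → ℝ) (ha : ∀ s ∈ F, 0 ≤ a s) {q : ℝ}
    (hq1 : 1 ≤ q) (hq2 : q ≤ 2) :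
    ∑ s ∈ F, a s ^ q ≤ (F.card : ℝ) ^ (1 - q / 2) * (∑ s ∈ F, a s ^ (2:ℝ)) ^ (q / 2) := by
  have hq0 : 0 < q := lt_of_lt_of_le one_pos hq1
  rcases F.eq_empty_or_nonempty with rfl | hF
  · simp [Real.zero_rpow (by positivity : q / 2 ≠ 0)]
  have hn : 0 < (F.card : ℝ) := by exact_mod_cast Finset.card_pos.2 hF
  have hS2 : 0 ≤ ∑ s ∈ F, a s ^ (2:ℝ) :=
    Finset.sum_nonneg fun i hi => Real.rpow_nonneg (ha i hi) _
  have key := Real.arith_mean_le_rpow_mean F (fun _ => (F.card : ℝ)⁻¹)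
    (fun s => a s ^ q) (fun i _ => by positivity)
    (by rw [Finset.sum_const, nsmul_eq_mul, mul_inv_cancel₀ hn.ne'])
    (fun i hi => Real.rpow_nonneg (ha i hi) q) (p := 2 / q)
    (by rw [le_div_iff₀ hq0]; linarith)
  have h2 : ∀ i ∈ F, (F.card : ℝ)⁻¹ * (a i ^ q) ^ (2 / q) = (F.card : ℝ)⁻¹ * a i ^ (2:ℝ) := by
    intro i hi
    rw [← Real.rpow_mul (ha i hi)]
    congr 2
    field_simp
  have key2 : (F.card : ℝ)⁻¹ * ∑ i ∈ F, a i ^ q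
      ≤ ((F.card : ℝ)⁻¹ * ∑ i ∈ F, a i ^ (2:ℝ)) ^ (q / 2) := by
    rw [Finset.mul_sum, Finset.mul_sum]
    calc ∑ i ∈ F, (F.card : ℝ)⁻¹ * a i ^ q
        ≤ (∑ i ∈ F, (F.card : ℝ)⁻¹ * (a i ^ q) ^ (2 / q)) ^ (1 / (2 / q)) := key
      _ = (∑ i ∈ F, (F.card : ℝ)⁻¹ * a i ^ (2:ℝ)) ^ (q / 2) := by
          rw [one_div_div, Finset.sum_congr rfl h2]
  have key3 := mul_le_mul_of_nonneg_left key2 hn.le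
  calc ∑ s ∈ F, a s ^ q
      = (F.card : ℝ) * ((F.card : ℝ)⁻¹ * ∑ i ∈ F, a i ^ q) := by
        rw [← mul_assoc, mul_inv_cancel₀ hn.ne', one_mul]
    _ ≤ (F.card : ℝ) * ((F.card : ℝ)⁻¹ * ∑ i ∈ F, a i ^ (2:ℝ)) ^ (q / 2) := key3
    _ = (F.card : ℝ) ^ (1 - q / 2) * (∑ s ∈ F, a s ^ (2:ℝ)) ^ (q / 2) := by
        rw [Real.mul_rpow (by positivity) hS2, Real.inv_rpow hn.le,
          ← mul_assoc, Real.rpow_sub hn, Real.rpow_one]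
        ring

lemma sumsq_aux (J : ℕ) (hJ : 0 < J) (G : Finset ℕ) (r : ℕ → ℕ)
    (hr1 : ∀ j ∈ G, 1 ≤ r j) (hr2 : ∀ j ∈ G, r j ≤ J)
    (hinj : ∀ j ∈ G, ∀ j' ∈ G, r j = r j' → j = j') :
    ∑ s ∈ Finset.Icc 1 J,
      ‖∑ j ∈ G, Complex.exp (2 * π * Complex.I * (r j : ℂ) * s / J)‖ ^ (2:ℝ)
      = (J : ℝ) * G.card := by
  classical
  set E : ℕ → ℕ → ℂ := fun j s => Complex.exp (2 * π * Complex.I * (r j : ℂ) * s / J) with hE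
  have conjE : ∀ j s : ℕ, (starRingEnd ℂ) (E j s)
      = Complex.exp (-(2 * π * Complex.I * (r j : ℂ) * s / J)) := by
    intro j s
    rw [hE, ← Complex.exp_conj]
    congr 1
    simp only [map_div₀, map_mul, map_ofNat, Complex.conj_ofReal, Complex.conj_I,
      Complex.conj_natCast]
    ring
  have term : ∀ j j' s : ℕ, E j s * (starRingEnd ℂ) (E j' s)
      = Complex.exp (2 * π * Complex.I * (((r j : ℤ) - (r j' : ℤ) : ℤ) : ℂ) * s / J) := by
    intro j j' s
    rw [conjE, hE, ← Complex.exp_add]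
    congr 1
    push_cast
    ring
  have inner : ∀ j ∈ G, ∀ j' ∈ G,
      ∑ s ∈ Finset.Icc 1 J,
        Complex.exp (2 * π * Complex.I * (((r j : ℤ) - (r j' : ℤ) : ℤ) : ℂ) * s / J)
      = if j' = j then (J : ℂ) else 0 := by
    intro j hj j' hj'
    by_cases h : j' = j
    · subst h
      simp only [sub_self, Int.cast_zero, mul_zero, zero_mul, zero_div, Complex.exp_zero]
      simp
    · rw [if_neg h]
      apply orth_aux J hJ
      · intro h0
        exact h (hinj j hj j' hj' (by omega)).symm
      · have := hr1 j hj; have := hr2 j hj; have := hr1 j' hj'; have := hr2 j' hj'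
        rw [abs_lt]
        constructor <;> [skip; skip] <;> push_cast <;> omega
  have main : ∑ s ∈ Finset.Icc 1 J,
      ((∑ j ∈ G, E j s) * (starRingEnd ℂ) (∑ j ∈ G, E j s)) = (J : ℂ) * G.card := by
    have : ∀ s : ℕ, (∑ j ∈ G, E j s) * (starRingEnd ℂ) (∑ j ∈ G, E j s)
        = ∑ j ∈ G, ∑ j' ∈ G, E j s * (starRingEnd ℂ) (E j' s) := by
      intro s
      rw [map_sum, Finset.sum_mul_sum]
    rw [Finset.sum_congr rfl fun s _ => this s]
    rw [Finset.sum_comm]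
    calc ∑ j ∈ G, ∑ s ∈ Finset.Icc 1 J, ∑ j' ∈ G, E j s * (starRingEnd ℂ) (E j' s)
        = ∑ j ∈ G, ∑ j' ∈ G, ∑ s ∈ Finset.Icc 1 J, E j s * (starRingEnd ℂ) (E j' s) := by
          exact Finset.sum_congr rfl fun j _ => Finset.sum_comm
      _ = ∑ j ∈ G, ∑ j' ∈ G, (if j' = j then (J:ℂ) else 0) := by
          refine Finset.sum_congr rfl fun j hj => Finset.sum_congr rfl fun j' hj' => ?_
          rw [Finset.sum_congr rfl fun s _ => term j j' s]
          exact inner j hj j' hj'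
      _ = ∑ j ∈ G, (J : ℂ) := by
          refine Finset.sum_congr rfl fun j hj => ?_
          rw [Finset.sum_ite_eq' G j (fun _ => (J:ℂ)), if_pos hj]
      _ = (J : ℂ) * G.card := by
          rw [Finset.sum_const, nsmul_eq_mul, mul_comm]
  have norm_term : ∀ z : ℂ, ((‖z‖ ^ (2:ℝ) : ℝ) : ℂ) = z * (starRingEnd ℂ) z := by
    intro z
    rw [Complex.mul_conj]
    exact congrArg _ (by rw [Real.rpow_two, Complex.sq_norm])
  have cast_eq : ((∑ s ∈ Finset.Icc 1 J, ‖∑ j ∈ G, E j s‖ ^ (2:ℝ) : ℝ) : ℂ)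
      = (((J : ℝ) * G.card : ℝ) : ℂ) := by
    rw [Complex.ofReal_sum]
    rw [Finset.sum_congr rfl fun s _ => norm_term (∑ j ∈ G, E j s), main]
    push_cast
    ring
  exact Complex.ofReal_injective cast_eq

lemma normsum_aux (p : ℝ≥0∞) [Fact (1 ≤ p)] (hp : 0 < p.toReal) (J : ℕ) (c : ℕ → ℂ) :
    ‖∑ s ∈ Finset.Icc 1 J,
        c s • (lp.single p (J + s - 1) (1:ℂ) : lp (fun _ : ℕ => ℂ) p)‖ ^ p.toReal
      = ∑ s ∈ Finset.Icc 1 J, ‖c s‖ ^ p.toReal := by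
  classical
  have hsm : ∀ s ∈ Finset.Icc 1 J, c s • (lp.single p (J + s - 1) (1:ℂ) : lp (fun _ : ℕ => ℂ) p)
      = lp.single p (J + s - 1) (c s) := by
    intro s _
    rw [← lp.single_smul]
    congr 1
    simp
  rw [Finset.sum_congr rfl hsm]
  set e : ℕ → ℕ := fun s => J + s - 1 with he
  set f : ℕ → ℂ := fun i => c (i + 1 - J) with hf
  have hinj : ∀ s ∈ Finset.Icc 1 J, ∀ t ∈ Finset.Icc 1 J, e s = e t → s = t := by
    intro s hs t ht h
    simp only [Finset.mem_Icc] at hs ht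
    simp only [he] at h
    omega
  have hfe : ∀ s ∈ Finset.Icc 1 J, f (e s) = c s := by
    intro s hs
    simp only [Finset.mem_Icc] at hs
    simp only [hf, he]
    congr 1
    omega
  have h1 : ∑ s ∈ Finset.Icc 1 J, (lp.single p (e s) (c s) : lp (fun _ : ℕ => ℂ) p)
      = ∑ i ∈ (Finset.Icc 1 J).image e, lp.single p i (f i) := by
    rw [Finset.sum_image hinj]
    exact Finset.sum_congr rfl fun s hs => by rw [hfe s hs]
  rw [h1, lp.norm_sum_single hp f, Finset.sum_image hinj]
  exact Finset.sum_congr rfl fun s hs => by rw [hfe s hs]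

set_option maxHeartbeats 1000000 in
lemma block_bound (p : ℝ≥0∞) [Fact (1 ≤ p)] (hp2 : p ≤ 2)
    (α : ℕ) (hα : 2 ≤ α)
    (x : ℕ → lp (fun _ : ℕ => ℂ) p)
    (hx : ∀ k : ℕ, 0 < k → ∀ j : ℕ,
      α ^ (k * (k - 1)) ≤ j → j ≤ 2 * α ^ (k * (k - 1)) - 1 →
      x j = ((α ^ (k * (k - 1)) : ℝ) ^ (-(1 / 2 + 1 / p.toReal + 1 / (k : ℝ)))) •
        ∑ s ∈ Finset.Icc 1 (α ^ (k * (k - 1))),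
          Complex.exp (2 * Real.pi * Complex.I *
              (((j - α ^ (k * (k - 1)) + 1 : ℕ) : ℂ) * (s : ℂ)) /
                ((α : ℂ) ^ (k * (k - 1)))) •
            lp.single p (α ^ (k * (k - 1)) + s - 1) (1 : ℂ))
    (k : ℕ) (hk : 0 < k) (G : Finset ℕ)
    (hG : G ⊆ Finset.Icc (α ^ (k * (k - 1))) (2 * α ^ (k * (k - 1)) - 1)) :
    ‖∑ j ∈ G, x j‖ ≤ ((α : ℝ) ^ (k - 1))⁻¹ := by
  classical
  have hα0 : 0 < α := by omega
  set J : ℕ := α ^ (k * (k - 1)) with hJdef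
  have hJ : 0 < J := pow_pos hα0 _
  -- real exponent facts
  have hptop : p ≠ ∞ := ne_top_of_le_ne_top (by simp) hp2
  have hpr1 : 1 ≤ p.toReal := by
    rw [← ENNReal.toReal_one]; exact ENNReal.toReal_mono hptop Fact.out
  have hpr2 : p.toReal ≤ 2 := by
    rw [← ENNReal.toReal_ofNat]; exact ENNReal.toReal_mono (by simp) hp2
  have hpr0 : 0 < p.toReal := lt_of_lt_of_le one_pos hpr1
  set A : ℝ := ((α : ℝ)) ^ (k * (k - 1)) with hAdef
  have hAJ : A = (J : ℝ) := by rw [hAdef, hJdef]; push_cast; ring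
  have hA : 0 < A := by positivity
  set cexp0 : ℝ := -(1 / 2 + 1 / p.toReal + 1 / (k : ℝ)) with hcexp
  set coef : ℝ := A ^ cexp0 with hcoef
  have hcoefpos : 0 < coef := Real.rpow_pos_of_pos hA _
  set E : ℕ → ℕ → ℂ := fun j s => Complex.exp (2 * Real.pi * Complex.I *
      (((j - J + 1 : ℕ) : ℂ) * (s : ℂ)) / ((α : ℂ) ^ (k * (k - 1)))) with hE
  set T : ℕ → ℂ := fun s => ∑ j ∈ G, E j s with hT
  have hmem : ∀ j ∈ G, J ≤ j ∧ j ≤ 2 * J - 1 := by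
    intro j hj
    have := hG hj
    simpa [Finset.mem_Icc] using this
  have hxg : ∀ j ∈ G, x j = coef • ∑ s ∈ Finset.Icc 1 J,
      E j s • (lp.single p (J + s - 1) (1:ℂ) : lp (fun _ : ℕ => ℂ) p) := by
    intro j hj
    exact hx k hk j (hmem j hj).1 (hmem j hj).2
  have hsum : ∑ j ∈ G, x j = coef • ∑ s ∈ Finset.Icc 1 J,
      T s • (lp.single p (J + s - 1) (1:ℂ) : lp (fun _ : ℕ => ℂ) p) := by
    rw [Finset.sum_congr rfl hxg, ← Finset.smul_sum]
    congr 1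
    rw [Finset.sum_comm]
    exact Finset.sum_congr rfl fun s _ => (Finset.sum_smul).symm
  set W : lp (fun _ : ℕ => ℂ) p := ∑ s ∈ Finset.Icc 1 J,
      T s • (lp.single p (J + s - 1) (1:ℂ) : lp (fun _ : ℕ => ℂ) p) with hW
  have hnorm : ‖∑ j ∈ G, x j‖ = coef * ‖W‖ := by
    rw [hsum, norm_smul, Real.norm_of_nonneg hcoefpos.le]
  -- norm of W to the p
  have hWp : ‖W‖ ^ p.toReal = ∑ s ∈ Finset.Icc 1 J, ‖T s‖ ^ p.toReal :=
    normsum_aux p hpr0 J T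
  -- sum of squares
  have hsq : ∑ s ∈ Finset.Icc 1 J, ‖T s‖ ^ (2:ℝ) = A * G.card := by
    rw [hAJ]
    have hEeq : ∀ j ∈ G, ∀ s : ℕ, E j s
        = Complex.exp (2 * Real.pi * Complex.I * ((j - J + 1 : ℕ) : ℂ) * s / (J : ℂ)) := by
      intro j _ s
      simp only [hE]
      have hcast : ((α : ℂ)) ^ (k * (k - 1)) = (J : ℂ) := by
        rw [hJdef]; push_cast; ring
      rw [hcast]
      congr 1
      ring
    have hTs : ∀ s : ℕ, T s = ∑ j ∈ G,
        Complex.exp (2 * Real.pi * Complex.I * ((j - J + 1 : ℕ) : ℂ) * s / (J : ℂ)) := by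
      intro s
      simp only [hT]
      exact Finset.sum_congr rfl fun j hj => hEeq j hj s
    calc ∑ s ∈ Finset.Icc 1 J, ‖T s‖ ^ (2:ℝ)
        = ∑ s ∈ Finset.Icc 1 J, ‖∑ j ∈ G,
            Complex.exp (2 * Real.pi * Complex.I * (((fun j => j - J + 1) j : ℕ) : ℂ) * s / (J : ℂ))‖ ^ (2:ℝ) := by
          exact Finset.sum_congr rfl fun s _ => by rw [hTs s]
      _ = (J : ℝ) * G.card := by
          apply sumsq_aux J hJ G (fun j => j - J + 1)
          · intro j hj; omega
          · intro j hj; have := hmem j hj; omega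
          · intro j hj j' hj' h
            have h1 := hmem j hj; have h2 := hmem j' hj'
            omega
  -- Hölder
  have hcard : (Finset.Icc 1 J).card = J := by
    rw [Nat.card_Icc]; omega
  have hGcard : (G.card : ℝ) ≤ A := by
    have := Finset.card_le_card hG
    rw [Nat.card_Icc] at this
    have hc : G.card ≤ J := by omega
    rw [hAJ]
    exact_mod_cast hc
  have hhold : ∑ s ∈ Finset.Icc 1 J, ‖T s‖ ^ p.toReal
      ≤ A ^ (1 - p.toReal / 2) * (A * A) ^ (p.toReal / 2) := by
    calc ∑ s ∈ Finset.Icc 1 J, ‖T s‖ ^ p.toReal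
        ≤ ((Finset.Icc 1 J).card : ℝ) ^ (1 - p.toReal / 2) *
            (∑ s ∈ Finset.Icc 1 J, ‖T s‖ ^ (2:ℝ)) ^ (p.toReal / 2) :=
          holder_aux _ _ (fun s _ => norm_nonneg _) hpr1 hpr2
      _ ≤ A ^ (1 - p.toReal / 2) * (A * A) ^ (p.toReal / 2) := by
          rw [hcard, hsq, ← hAJ]
          apply mul_le_mul_of_nonneg_left
          · apply Real.rpow_le_rpow (by positivity) _ (by positivity)
            exact mul_le_mul_of_nonneg_left hGcard hA.le
          · positivity
  have hAA : (A * A) ^ (p.toReal / 2) = A ^ p.toReal := by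
    rw [show A * A = A ^ (2:ℝ) by rw [Real.rpow_two]; ring, ← Real.rpow_mul hA.le]
    congr 1
    ring
  -- total bound on ‖S‖ ^ p.toReal
  have hSp : ‖∑ j ∈ G, x j‖ ^ p.toReal ≤ A ^ (-(p.toReal / (k : ℝ))) := by
    have hk0 : ((k : ℝ)) ≠ 0 := Nat.cast_ne_zero.2 hk.ne'
    have e1 : ‖∑ j ∈ G, x j‖ ^ p.toReal = coef ^ p.toReal * ‖W‖ ^ p.toReal := by
      rw [hnorm, Real.mul_rpow hcoefpos.le (norm_nonneg _)]
    have e2 : coef ^ p.toReal = A ^ (cexp0 * p.toReal) := by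
      rw [hcoef, ← Real.rpow_mul hA.le]
    have e3 : ‖W‖ ^ p.toReal ≤ A ^ (1 - p.toReal / 2 + p.toReal) := by
      rw [hWp]
      calc ∑ s ∈ Finset.Icc 1 J, ‖T s‖ ^ p.toReal
          ≤ A ^ (1 - p.toReal / 2) * (A * A) ^ (p.toReal / 2) := hhold
        _ = A ^ (1 - p.toReal / 2 + p.toReal) := by
            rw [hAA, ← Real.rpow_add hA]
    have e4 : cexp0 * p.toReal + (1 - p.toReal / 2 + p.toReal) = -(p.toReal / (k : ℝ)) := by
      rw [hcexp]
      field_simp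
      ring
    calc ‖∑ j ∈ G, x j‖ ^ p.toReal
        = A ^ (cexp0 * p.toReal) * ‖W‖ ^ p.toReal := by rw [e1, e2]
      _ ≤ A ^ (cexp0 * p.toReal) * A ^ (1 - p.toReal / 2 + p.toReal) :=
          mul_le_mul_of_nonneg_left e3 (by positivity)
      _ = A ^ (-(p.toReal / (k : ℝ))) := by rw [← Real.rpow_add hA, e4]
  -- conclude
  have hk0 : ((k : ℝ)) ≠ 0 := Nat.cast_ne_zero.2 hk.ne'
  have hfin : ‖∑ j ∈ G, x j‖ ≤ A ^ (-(1 / (k : ℝ))) := by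
    rw [← Real.rpow_le_rpow_iff (norm_nonneg _) (by positivity) hpr0]
    calc ‖∑ j ∈ G, x j‖ ^ p.toReal ≤ A ^ (-(p.toReal / (k : ℝ))) := hSp
      _ = (A ^ (-(1 / (k : ℝ)))) ^ p.toReal := by
          rw [← Real.rpow_mul hA.le]
          congr 1
          field_simp
  refine hfin.trans (le_of_eq ?_)
  have hB : (0:ℝ) < (α : ℝ) ^ (k - 1) := by positivity
  rw [hAdef]
  rw [show k * (k - 1) = (k - 1) * k by ring, pow_mul, ← Real.rpow_natCast ((α:ℝ) ^ (k-1)) k,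
    ← Real.rpow_mul hB.le]
  rw [show (k : ℝ) * -(1 / (k : ℝ)) = -1 by field_simp]
  rw [Real.rpow_neg_one]

set_option maxHeartbeats 1000000 in
lemma norm_val (p : ℝ≥0∞) [Fact (1 ≤ p)] (hp2 : p ≤ 2)
    (α : ℕ) (hα : 2 ≤ α)
    (x : ℕ → lp (fun _ : ℕ => ℂ) p)
    (hx : ∀ k : ℕ, 0 < k → ∀ j : ℕ,
      α ^ (k * (k - 1)) ≤ j → j ≤ 2 * α ^ (k * (k - 1)) - 1 →
      x j = ((α ^ (k * (k - 1)) : ℝ) ^ (-(1 / 2 + 1 / p.toReal + 1 / (k : ℝ)))) •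
        ∑ s ∈ Finset.Icc 1 (α ^ (k * (k - 1))),
          Complex.exp (2 * Real.pi * Complex.I *
              (((j - α ^ (k * (k - 1)) + 1 : ℕ) : ℂ) * (s : ℂ)) /
                ((α : ℂ) ^ (k * (k - 1)))) •
            lp.single p (α ^ (k * (k - 1)) + s - 1) (1 : ℂ))
    (k : ℕ) (hk : 0 < k) (j : ℕ)
    (hj1 : α ^ (k * (k - 1)) ≤ j) (hj2 : j ≤ 2 * α ^ (k * (k - 1)) - 1) :
    ‖x j‖ = ((α : ℝ) ^ (k * (k - 1))) ^ (-(1 / 2 + 1 / (k : ℝ))) := by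
  classical
  have hα0 : 0 < α := by omega
  set J : ℕ := α ^ (k * (k - 1)) with hJdef
  have hJ : 0 < J := pow_pos hα0 _
  have hptop : p ≠ ∞ := ne_top_of_le_ne_top (by simp) hp2
  have hpr1 : 1 ≤ p.toReal := by
    rw [← ENNReal.toReal_one]; exact ENNReal.toReal_mono hptop Fact.out
  have hpr0 : 0 < p.toReal := lt_of_lt_of_le one_pos hpr1
  set A : ℝ := ((α : ℝ)) ^ (k * (k - 1)) with hAdef
  have hAJ : A = (J : ℝ) := by rw [hAdef, hJdef]; push_cast; ring
  have hA : 0 < A := by positivity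
  set E : ℕ → ℂ := fun s => Complex.exp (2 * Real.pi * Complex.I *
      (((j - J + 1 : ℕ) : ℂ) * (s : ℂ)) / ((α : ℂ) ^ (k * (k - 1)))) with hE
  have hxj : x j = (A ^ (-(1 / 2 + 1 / p.toReal + 1 / (k : ℝ)))) •
      ∑ s ∈ Finset.Icc 1 J, E s • (lp.single p (J + s - 1) (1:ℂ) : lp (fun _ : ℕ => ℂ) p) :=
    hx k hk j hj1 hj2
  have hnormE : ∀ s : ℕ, ‖E s‖ = 1 := by
    intro s
    have harg : 2 * (Real.pi : ℂ) * Complex.I * (((j - J + 1 : ℕ) : ℂ) * (s : ℂ)) /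
        ((α : ℂ) ^ (k * (k - 1)))
        = ((2 * Real.pi * ((j - J + 1 : ℕ) : ℝ) * (s : ℝ) / ((α : ℝ) ^ (k * (k - 1))) : ℝ) : ℂ)
            * Complex.I := by
      push_cast
      ring
    simp only [hE]
    rw [harg, Complex.norm_exp_ofReal_mul_I]
  have hWnorm : ‖∑ s ∈ Finset.Icc 1 J, E s •
      (lp.single p (J + s - 1) (1:ℂ) : lp (fun _ : ℕ => ℂ) p)‖ = A ^ (1 / p.toReal) := by
    have h1 : ‖∑ s ∈ Finset.Icc 1 J, E s •
        (lp.single p (J + s - 1) (1:ℂ) : lp (fun _ : ℕ => ℂ) p)‖ ^ p.toReal = A := by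
      rw [normsum_aux p hpr0 J E]
      calc ∑ s ∈ Finset.Icc 1 J, ‖E s‖ ^ p.toReal
          = ∑ s ∈ Finset.Icc 1 J, (1:ℝ) := by
            refine Finset.sum_congr rfl fun s _ => ?_
            rw [hnormE s, Real.one_rpow]
        _ = A := by
            rw [Finset.sum_const, Nat.card_Icc, hAJ]
            simp
    have h2 := congrArg (fun y : ℝ => y ^ (1 / p.toReal)) h1
    rw [← Real.rpow_mul (norm_nonneg _), mul_one_div, div_self hpr0.ne', Real.rpow_one] at h2
    exact h2
  rw [hxj, norm_smul, hWnorm, Real.norm_of_nonneg (Real.rpow_nonneg hA.le _),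
    ← Real.rpow_add hA]
  congr 1
  have : 1 / p.toReal + -(1/2 + 1/p.toReal + 1/(k:ℝ)) = -(1/2 + 1/(k:ℝ)) := by ring
  linarith [this]

/-- **Macphail-type construction in `ℓ_p(ℂ)` (Theorem 2.1).**
Let `p ∈ [1,2]` and `α ≥ 2` an integer.  With `j_k = α^{k(k-1)}`, the sequence
`x⁽ʲ⁾ = j_k^{-(1/2+1/p+1/k)} ∑_{s=1}^{j_k} exp(2πi·rs/j_k) e_{j_k+s-1}` (for
`j_k ≤ j ≤ 2j_k - 1`, `r = j - j_k + 1`, and `0` otherwise) is unconditionally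
summable in `ℓ_p(ℂ)` while `∑_j ‖x⁽ʲ⁾‖^{2-ε} = ∞` for every `ε > 0`. -/
theorem macphail_construction_complex
    (p : ℝ≥0∞) [Fact (1 ≤ p)] (hp2 : p ≤ 2)
    (α : ℕ) (hα : 2 ≤ α)
    (x : ℕ → lp (fun _ : ℕ => ℂ) p)
    (hx : ∀ k : ℕ, 0 < k → ∀ j : ℕ,
      α ^ (k * (k - 1)) ≤ j → j ≤ 2 * α ^ (k * (k - 1)) - 1 →
      x j = ((α ^ (k * (k - 1)) : ℝ) ^ (-(1 / 2 + 1 / p.toReal + 1 / (k : ℝ)))) •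
        ∑ s ∈ Finset.Icc 1 (α ^ (k * (k - 1))),
          Complex.exp (2 * Real.pi * Complex.I *
              (((j - α ^ (k * (k - 1)) + 1 : ℕ) : ℂ) * (s : ℂ)) /
                ((α : ℂ) ^ (k * (k - 1)))) •
            lp.single p (α ^ (k * (k - 1)) + s - 1) (1 : ℂ))
    (hx0 : ∀ j : ℕ,
      (¬ ∃ k : ℕ, 0 < k ∧ α ^ (k * (k - 1)) ≤ j ∧ j ≤ 2 * α ^ (k * (k - 1)) - 1) →
      x j = 0) :
    Summable x ∧ ∀ ε : ℝ, 0 < ε → ¬ Summable (fun j : ℕ => ‖x j‖ ^ (2 - ε)) := by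
  classical
  have hα0 : 0 < α := by omega
  have hα1 : 1 ≤ α := by omega
  -- basic facts about the blocks
  have hJpos : ∀ k : ℕ, 0 < α ^ (k * (k - 1)) := fun k => pow_pos hα0 _
  have hmono : ∀ k k' : ℕ, k ≤ k' → α ^ (k * (k - 1)) ≤ α ^ (k' * (k' - 1)) := by
    intro k k' h
    exact Nat.pow_le_pow_right hα1 (Nat.mul_le_mul h (by omega))
  have hsep : ∀ k k' : ℕ, 0 < k → k < k' → 2 * α ^ (k * (k - 1)) ≤ α ^ (k' * (k' - 1)) := by
    intro k k' hk h
    have hexp : k * (k - 1) + 1 ≤ k' * (k' - 1) := by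
      obtain ⟨a, rfl⟩ : ∃ a, k = a + 1 := ⟨k - 1, by omega⟩
      have h2 : (a + 2) * (a + 1) ≤ k' * (k' - 1) :=
        Nat.mul_le_mul (by omega) (by omega)
      have h1 : (a + 1) * (a + 1 - 1) + 1 ≤ (a + 2) * (a + 1) := by
        simp only [Nat.add_sub_cancel]
        nlinarith
      omega
    calc 2 * α ^ (k * (k - 1)) ≤ α * α ^ (k * (k - 1)) := by
          exact Nat.mul_le_mul_right _ hα
      _ = α ^ (k * (k - 1) + 1) := by rw [pow_succ, mul_comm]
      _ ≤ α ^ (k' * (k' - 1)) := Nat.pow_le_pow_right hα1 hexp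
  have hkJ : ∀ k : ℕ, 0 < k → k ≤ α ^ (k * (k - 1)) := by
    intro k hk
    have h1 : k ≤ 2 ^ (k - 1) := by
      have := Nat.lt_two_pow_self (n := k - 1)
      omega
    calc k ≤ 2 ^ (k - 1) := h1
      _ ≤ α ^ (k - 1) := Nat.pow_le_pow_left hα _
      _ ≤ α ^ (k * (k - 1)) := Nat.pow_le_pow_right hα1 (Nat.le_mul_of_pos_left _ hk)
  constructor
  · -- Summability
    rw [summable_iff_vanishing_norm]
    intro ε hε
    obtain ⟨K, hK⟩ := exists_pow_lt_of_lt_one (show (0:ℝ) < ε / 4 by linarith)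
      (show (1:ℝ)/2 < 1 by norm_num)
    refine ⟨Finset.range (2 * α ^ (K * (K - 1))), fun t ht => ?_⟩
    set P : ℕ → Prop := fun j => ∃ k : ℕ, 0 < k ∧ α ^ (k * (k - 1)) ≤ j ∧
      j ≤ 2 * α ^ (k * (k - 1)) - 1 with hP
    have hsplit : ∑ j ∈ t.filter P, x j = ∑ j ∈ t, x j :=
      Finset.sum_filter_of_ne (fun j hj hne => by
        by_contra hPj
        exact hne (hx0 j hPj))
    set t' := t.filter P with ht'
    set N := t.sup id with hN
    have htt : ∀ j ∈ t, 2 * α ^ (K * (K - 1)) ≤ j := by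
      intro j hj
      by_contra hlt
      exact (Finset.disjoint_left.mp ht hj) (Finset.mem_range.mpr (by omega))
    have hdecomp : t' = (Finset.Icc (K + 1) N).biUnion
        (fun k => t'.filter (fun j => α ^ (k * (k - 1)) ≤ j ∧ j ≤ 2 * α ^ (k * (k - 1)) - 1)) := by
      ext j
      simp only [Finset.mem_biUnion, Finset.mem_filter, Finset.mem_Icc]
      constructor
      · intro hj
        have hjt' : j ∈ t' := hj
        have hjt : j ∈ t := (Finset.mem_filter.mp hjt').1
        obtain ⟨k, hk0, h1, h2⟩ := (Finset.mem_filter.mp hjt').2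
        refine ⟨k, ⟨?_, ?_⟩, hjt', h1, h2⟩
        · -- K + 1 ≤ k
          by_contra hlt
          have hkK : k ≤ K := by omega
          have hm1 := hmono k K hkK
          have hm2 := htt j hjt
          have hp := hJpos k
          generalize hga : α ^ (k * (k - 1)) = a at h1 h2 hm1 hp
          generalize hgb : α ^ (K * (K - 1)) = b at hm1 hm2
          omega
        · -- k ≤ N
          have : k ≤ j := le_trans (hkJ k hk0) h1
          have hjN : j ≤ N := Finset.le_sup (f := id) hjt
          omega
      · rintro ⟨k, _, hjt', _, _⟩
        exact hjt'
    have hpair : (↑(Finset.Icc (K + 1) N) : Set ℕ).PairwiseDisjoint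
        (fun k => t'.filter (fun j => α ^ (k * (k - 1)) ≤ j ∧ j ≤ 2 * α ^ (k * (k - 1)) - 1)) := by
      intro k hk k' hk' hne
      simp only [Finset.coe_Icc, Set.mem_Icc] at hk hk'
      apply Finset.disjoint_left.mpr
      intro j hj hj'
      simp only [Finset.mem_filter] at hj hj'
      obtain ⟨-, hj1, hj2⟩ := hj
      obtain ⟨-, hj1', hj2'⟩ := hj'
      rcases lt_or_gt_of_ne hne with h | h
      · have hs1 := hsep k k' (by omega) h
        have := hJpos k
        omega
      · have hs1 := hsep k' k (by omega) h
        have := hJpos k'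
        omega
    have hbound : ∀ k ∈ Finset.Icc (K + 1) N,
        ‖∑ j ∈ t'.filter (fun j => α ^ (k * (k - 1)) ≤ j ∧ j ≤ 2 * α ^ (k * (k - 1)) - 1),
          x j‖ ≤ ((1:ℝ)/2) ^ (k - 1) := by
      intro k hk
      simp only [Finset.mem_Icc] at hk
      have hb := block_bound p hp2 α hα x hx k (by omega)
        (t'.filter (fun j => α ^ (k * (k - 1)) ≤ j ∧ j ≤ 2 * α ^ (k * (k - 1)) - 1))
        (fun j hj => by
          simp only [Finset.mem_filter] at hj
          exact Finset.mem_Icc.mpr hj.2)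
      refine hb.trans ?_
      rw [one_div, inv_pow]
      apply inv_anti₀ (by positivity)
      calc (2:ℝ) ^ (k - 1) ≤ (α:ℝ) ^ (k - 1) := by
            apply pow_le_pow_left₀ (by norm_num)
            exact_mod_cast hα
      _ = _ := rfl
    have hgeom : ∑ k ∈ Finset.Icc (K + 1) N, ((1:ℝ)/2) ^ (k - 1) ≤ 2 * ((1:ℝ)/2) ^ K := by
      rw [← Finset.Ico_add_one_right_eq_Icc, Finset.sum_Ico_eq_sum_range]
      have heq : ∀ i ∈ Finset.range (N + 1 - (K + 1)), ((1:ℝ)/2) ^ (K + 1 + i - 1)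
          = ((1:ℝ)/2) ^ K * ((1:ℝ)/2) ^ i := by
        intro i _
        rw [← pow_add]
        congr 1
        omega
      rw [Finset.sum_congr rfl heq, ← Finset.mul_sum]
      have hsum2 : ∑ i ∈ Finset.range (N + 1 - (K + 1)), ((1:ℝ)/2) ^ i ≤ 2 := by
        have h1 : ∑ i ∈ Finset.range (N + 1 - (K + 1)), ((1:ℝ)/2) ^ i
            ≤ ∑' i : ℕ, ((1:ℝ)/2) ^ i :=
          Summable.sum_le_tsum _ (fun i _ => by positivity)
            (summable_geometric_of_lt_one (by norm_num) (by norm_num))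
        rwa [tsum_geometric_of_lt_one (by norm_num) (by norm_num), show ((1:ℝ) - 1/2)⁻¹ = 2 by norm_num] at h1
      calc ((1:ℝ)/2) ^ K * ∑ i ∈ Finset.range (N + 1 - (K + 1)), ((1:ℝ)/2) ^ i
          ≤ ((1:ℝ)/2) ^ K * 2 := by
            apply mul_le_mul_of_nonneg_left hsum2 (by positivity)
        _ = 2 * ((1:ℝ)/2) ^ K := by ring
    have hre : ∑ j ∈ t', x j = ∑ k ∈ Finset.Icc (K + 1) N, ∑ j ∈ t'.filter
        (fun j => α ^ (k * (k - 1)) ≤ j ∧ j ≤ 2 * α ^ (k * (k - 1)) - 1), x j := by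
      rw [← Finset.sum_biUnion hpair, ← hdecomp]
    calc ‖∑ j ∈ t, x j‖ = ‖∑ j ∈ t', x j‖ := by rw [hsplit]
      _ = ‖∑ k ∈ Finset.Icc (K + 1) N, ∑ j ∈ t'.filter
            (fun j => α ^ (k * (k - 1)) ≤ j ∧ j ≤ 2 * α ^ (k * (k - 1)) - 1), x j‖ := by
          rw [hre]
      _ ≤ ∑ k ∈ Finset.Icc (K + 1) N, ‖∑ j ∈ t'.filter
            (fun j => α ^ (k * (k - 1)) ≤ j ∧ j ≤ 2 * α ^ (k * (k - 1)) - 1), x j‖ :=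
          norm_sum_le _ _
      _ ≤ ∑ k ∈ Finset.Icc (K + 1) N, ((1:ℝ)/2) ^ (k - 1) :=
          Finset.sum_le_sum hbound
      _ ≤ 2 * ((1:ℝ)/2) ^ K := hgeom
      _ < ε := by nlinarith
  · -- Divergence
    intro ε hε hS
    set C := ∑' j : ℕ, ‖x j‖ ^ (2 - ε) with hC
    -- pick k large
    have hb1 : (1:ℝ) < (2:ℝ) ^ (ε / 4) := by
      rw [show (1:ℝ) = (2:ℝ) ^ (0:ℝ) by rw [Real.rpow_zero]]
      exact Real.rpow_lt_rpow_left_iff (by norm_num) |>.mpr (by linarith)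
    obtain ⟨n, hn⟩ := pow_unbounded_of_one_lt (max C 1) hb1
    set k := max (n + 1) (⌈(8:ℝ) / ε⌉₊ + 1) with hkdef
    have hk0 : 0 < k := by positivity
    have hkn : n + 1 ≤ k := le_max_left _ _
    have hk8 : (8:ℝ) / ε ≤ (k:ℝ) := by
      have h1 : (8:ℝ) / ε ≤ (⌈(8:ℝ) / ε⌉₊ : ℝ) := Nat.le_ceil _
      have h2 : (⌈(8:ℝ) / ε⌉₊ + 1 : ℕ) ≤ k := le_max_right _ _
      have h3 : ((⌈(8:ℝ) / ε⌉₊ : ℝ)) ≤ (k:ℝ) := by exact_mod_cast by omega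
      linarith
    set J : ℕ := α ^ (k * (k - 1)) with hJdef
    set A : ℝ := ((α:ℝ)) ^ (k * (k - 1)) with hAdef
    have hA1 : 1 ≤ A := by
      rw [hAdef, show ((α:ℝ)) ^ (k * (k - 1)) = ((α ^ (k * (k - 1)) : ℕ) : ℝ) by push_cast; ring]
      exact_mod_cast hJpos k
    have hA : 0 < A := lt_of_lt_of_le one_pos hA1
    -- block sum value
    have hcardB : (Finset.Icc J (2 * J - 1)).card = J := by
      rw [Nat.card_Icc]
      have := hJpos k
      omega
    have hnorm : ∀ j ∈ Finset.Icc J (2 * J - 1), ‖x j‖ ^ (2 - ε)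
        = A ^ ((-(1/2 + 1/(k:ℝ))) * (2 - ε)) := by
      intro j hj
      rw [Finset.mem_Icc] at hj
      rw [norm_val p hp2 α hα x hx k hk0 j hj.1 hj.2, ← Real.rpow_mul hA.le]
    have hblock : ∑ j ∈ Finset.Icc J (2 * J - 1), ‖x j‖ ^ (2 - ε)
        = A ^ (1 + (-(1/2 + 1/(k:ℝ))) * (2 - ε)) := by
      rw [Finset.sum_congr rfl hnorm, Finset.sum_const, hcardB, nsmul_eq_mul,
        Real.rpow_add hA, Real.rpow_one]
      congr 1
      rw [hAdef, hJdef]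
      push_cast
      ring
    -- the exponent is at least ε/4
    have hkpos : (0:ℝ) < (k:ℝ) := by exact_mod_cast hk0
    have hexp : ε / 4 ≤ 1 + (-(1/2 + 1/(k:ℝ))) * (2 - ε) := by
      have h2k : 2 / (k:ℝ) ≤ ε / 4 := by
        rw [div_le_div_iff₀ hkpos (by norm_num)]
        have := (div_le_iff₀ hε).mp hk8
        nlinarith
      have hu : 0 < 1 / (k:ℝ) := by positivity
      have he : 1 + (-(1/2 + 1/(k:ℝ))) * (2 - ε) = ε/2 - 2/(k:ℝ) + ε * (1/(k:ℝ)) := by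
        field_simp
        ring
      rw [he]
      nlinarith
    -- A ^ (ε/4) > C
    have hAbig : C < A ^ (ε / 4) := by
      have h2n : (2:ℝ) ^ n ≤ A := by
        calc (2:ℝ) ^ n ≤ (2:ℝ) ^ (k * (k - 1)) := by
              apply pow_le_pow_right₀ (by norm_num)
              have : k - 1 ≤ k * (k - 1) := Nat.le_mul_of_pos_left _ hk0
              omega
          _ ≤ A := by
              rw [hAdef]
              apply pow_le_pow_left₀ (by norm_num)
              exact_mod_cast hα
      have h1 : ((2:ℝ) ^ (ε/4)) ^ n ≤ A ^ (ε/4) := by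
        rw [← Real.rpow_natCast ((2:ℝ) ^ (ε/4)) n, ← Real.rpow_mul (by norm_num),
          mul_comm, Real.rpow_mul (by norm_num : (0:ℝ) ≤ 2), Real.rpow_natCast]
        exact Real.rpow_le_rpow (by positivity) h2n (by positivity)
      calc C ≤ max C 1 := le_max_left _ _
        _ < ((2:ℝ) ^ (ε/4)) ^ n := hn
        _ ≤ A ^ (ε/4) := h1
    -- contradiction
    have hfin : ∑ j ∈ Finset.Icc J (2 * J - 1), ‖x j‖ ^ (2 - ε) ≤ C :=
      Summable.sum_le_tsum _ (fun j _ => Real.rpow_nonneg (norm_nonneg _) _) hS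
    rw [hblock] at hfin
    have : A ^ (ε/4) ≤ A ^ (1 + (-(1/2 + 1/(k:ℝ))) * (2 - ε)) :=
      Real.rpow_le_rpow_of_exponent_le hA1 hexp
    linarith
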